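/- If a is odd, gcd(a, b) = 1, and q ≥ 2, then the greatest common divisor of (q^a + 1)/(q + 1) and q^b - 1 divides gcd(a, q + 1). -/

import Mathlib

theorem gcd_div_plus_pow_sub (q a b : ℕ) (hq : 2 ≤ q) (ha : Odd a) (ha1 : 1 ≤ a)
    (hb : 1 ≤ b) (hab : Nat.gcd a b = 1) :
    Nat.gcd ((q ^ a + 1) / (q + 1)) (q ^ b - 1) ∣ Nat.gcd a (q + 1) := by
  set N := (q ^ a + 1) / (q + 1) with hNdef
  set d := Nat.gcd N (q ^ b - 1) with hddef
  -- q + 1 ∣ q ^ a + 1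
  have hdvd : (q + 1) ∣ q ^ a + 1 := by
    have : ((q : ℤ) + 1) ∣ (q : ℤ) ^ a + 1 := by
      have := Odd.add_dvd_pow_add_pow (q : ℤ) 1 ha
      simpa using this
    exact_mod_cast Int.natCast_dvd_natCast.mpr (by exact_mod_cast this)
  have hN : N * (q + 1) = q ^ a + 1 := Nat.div_mul_cancel hdvd
  have hdN : d ∣ N := Nat.gcd_dvd_left _ _
  have hdM : d ∣ q ^ b - 1 := Nat.gcd_dvd_right _ _
  have hdqa : d ∣ q ^ a + 1 := hdN.trans ⟨q + 1, hN.symm⟩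
  -- pass to ZMod d
  set u : ZMod d := (q : ZMod d) with hu
  have hqb1 : 1 ≤ q ^ b := Nat.one_le_pow _ _ (by omega)
  have hub : u ^ b = 1 := by
    have h0 : ((q ^ b - 1 : ℕ) : ZMod d) = 0 :=
      (ZMod.natCast_eq_zero_iff _ _).mpr hdM
    rw [Nat.cast_sub hqb1] at h0
    push_cast at h0
    rw [hu]
    linear_combination h0
  have hua : u ^ a = -1 := by
    have h0 : ((q ^ a + 1 : ℕ) : ZMod d) = 0 :=
      (ZMod.natCast_eq_zero_iff _ _).mpr hdqa
    push_cast at h0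
    rw [hu]
    linear_combination h0
  have hu2a : u ^ (2 * a) = 1 := by
    rw [mul_comm, pow_mul, hua]; ring
  have hgcd2 : Nat.gcd (2 * a) b ∣ 2 := by
    have h1 : Nat.gcd (2 * a) b ∣ Nat.gcd (2 * a) (2 * b) :=
      Nat.dvd_gcd (Nat.gcd_dvd_left _ _) ((Nat.gcd_dvd_right _ _).trans ⟨2, by ring⟩)
    rwa [Nat.gcd_mul_left, hab, mul_one] at h1
  have hg : u ^ Nat.gcd (2 * a) b = 1 := pow_gcd_eq_one.mpr ⟨hu2a, hub⟩
  have hu2 : u ^ 2 = 1 := by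
    obtain ⟨k, hk⟩ := hgcd2
    rw [hk, pow_mul, hg, one_pow]
  have huneg : u = -1 := by
    obtain ⟨m, hm⟩ := ha
    have : u ^ a = u := by
      rw [hm, pow_add, pow_mul, hu2, one_pow, pow_one, one_mul]
    rw [this] at hua
    exact hua
  -- d ∣ q + 1
  have hdq1 : d ∣ q + 1 := by
    rw [← ZMod.natCast_eq_zero_iff]
    push_cast
    rw [← hu, huneg]; ring
  -- N equals alternating geometric sum over ℤ
  have hS : (N : ℤ) = ∑ i ∈ Finset.range a, (-(q : ℤ)) ^ i := by
    have hgeom := geom_sum_mul (-(q : ℤ)) a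
    have hna : (-(q : ℤ)) ^ a = -(q : ℤ) ^ a := Odd.neg_pow ha _
    have h1 : (∑ i ∈ Finset.range a, (-(q : ℤ)) ^ i) * ((q : ℤ) + 1) = (q : ℤ) ^ a + 1 := by
      have := hgeom
      rw [hna] at this
      linear_combination -this
    have h2 : (N : ℤ) * ((q : ℤ) + 1) = (q : ℤ) ^ a + 1 := by exact_mod_cast hN
    have hq1 : ((q : ℤ) + 1) ≠ 0 := by positivity
    exact mul_right_cancel₀ hq1 (h2.trans h1.symm)
  -- d ∣ a
  have hda : d ∣ a := by
    rw [← ZMod.natCast_eq_zero_iff]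
    have h0 : ((N : ℤ) : ZMod d) = 0 := by
      rw [Int.cast_natCast]
      exact (ZMod.natCast_eq_zero_iff _ _).mpr hdN
    rw [hS] at h0
    push_cast at h0
    rw [← hu, huneg] at h0
    simpa using h0
  exact Nat.dvd_gcd hda hdq1
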